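/- Let D be a weighted oriented uni-directed line with vertices V(D) = {x₁, ..., xₙ} and directed edges E(D) = {(xᵢ, x_{i+1}) : 1 ≤ i ≤ n-1}, and suppose for some i with 1 < i < n-1 one has wᵢ ≥ 2 and w_{i+1} = 1. Then the monomial f = x_{i-1} xᵢ^{wᵢ} x_{i+1}² x_{i+2}^{w_{i+2}} belongs to the third symbolic power I(D)^(3) of the edge ideal I(D) = (x₁x₂^{w₂}, ..., x_{n-1}xₙ^{wₙ}). -/

import Mathlib

open MvPolynomial

/-- A weighted oriented graph on the (finite) vertex type `V`: a set of directed
edges whose underlying edge set is a finite simple graph, together with a weight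
function `w : V → ℕ` with `w v ≥ 1` for every vertex. -/
structure WOGraph (V : Type*) where
  E : Set (V × V)
  w : V → ℕ
  loopless : ∀ v : V, (v, v) ∉ E
  one_dir : ∀ u v : V, (u, v) ∈ E → (v, u) ∉ E
  w_pos : ∀ v : V, 1 ≤ w v

namespace WOGraph

variable {V : Type*}

/-- The out-neighbourhood `N⁺(x)`. -/
def outN (D : WOGraph V) (x : V) : Set V := {y | (x, y) ∈ D.E}

/-- The in-neighbourhood `N⁻(x)`. -/
def inN (D : WOGraph V) (x : V) : Set V := {y | (y, x) ∈ D.E}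

/-- An isolated vertex: no neighbours at all. -/
def IsIsolated (D : WOGraph V) (x : V) : Prop := D.outN x = ∅ ∧ D.inN x = ∅

/-- A source: a non-isolated vertex with empty in-neighbourhood. -/
def IsSource (D : WOGraph V) (x : V) : Prop := ¬ D.IsIsolated x ∧ D.inN x = ∅

/-- A sink: a non-isolated vertex with empty out-neighbourhood. -/
def IsSink (D : WOGraph V) (x : V) : Prop := ¬ D.IsIsolated x ∧ D.outN x = ∅

/-- A vertex cover: a set of vertices meeting every edge. -/
def IsVertexCover (D : WOGraph V) (C : Set V) : Prop := ∀ e ∈ D.E, e.1 ∈ C ∨ e.2 ∈ C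

/-- `L₁(C) = {x ∈ C : N⁺(x) ∩ Cᶜ ≠ ∅}`. -/
def L1 (D : WOGraph V) (C : Set V) : Set V := {x ∈ C | (D.outN x ∩ Cᶜ).Nonempty}

/-- `L₂(C) = {x ∈ C \ L₁(C) : N⁻(x) ∩ Cᶜ ≠ ∅}`. -/
def L2 (D : WOGraph V) (C : Set V) : Set V :=
  {x ∈ C | x ∉ D.L1 C ∧ (D.inN x ∩ Cᶜ).Nonempty}

/-- `L₃(C) = C \ (L₁(C) ∪ L₂(C))`. -/
def L3 (D : WOGraph V) (C : Set V) : Set V := C \ (D.L1 C ∪ D.L2 C)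

/-- A strong vertex cover: a vertex cover `C` such that for each `x ∈ L₃(C)` there is an
edge `(y, x)` with `y ∈ L₂(C) ∪ L₃(C)` and `w(y) ≥ 2`. -/
def IsStrongVertexCover (D : WOGraph V) (C : Set V) : Prop :=
  D.IsVertexCover C ∧
    ∀ x ∈ D.L3 C, ∃ y : V, (y, x) ∈ D.E ∧ y ∈ D.L2 C ∪ D.L3 C ∧ 2 ≤ D.w y

/-- The edge ideal `I(D) = (x·y^{w(y)} : (x,y) ∈ E(D))` in `k[xᵥ : v ∈ V]`. -/
noncomputable def edgeIdeal (k : Type*) [Field k] (D : WOGraph V) : Ideal (MvPolynomial V k) :=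
  Ideal.span {f | ∃ e ∈ D.E, f = X e.1 * X e.2 ^ D.w e.2}

/-- The irreducible ideal `I_C = ({x : x ∈ L₁(C)} ∪ {x^{w(x)} : x ∈ L₂(C) ∪ L₃(C)})`
associated to a (strong) vertex cover `C`. -/
noncomputable def irredIdeal (k : Type*) [Field k] (D : WOGraph V) (C : Set V) : Ideal (MvPolynomial V k) :=
  Ideal.span ((fun v => (X v : MvPolynomial V k)) '' D.L1 C ∪
    (fun v => (X v : MvPolynomial V k) ^ D.w v) '' (D.L2 C ∪ D.L3 C))

/-- `D` is an oriented rooted tree with root `z`: `z` has no in-edges, and every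
non-isolated vertex `v ≠ z` is reachable from `z` by a directed path and has a unique
in-neighbour.  Equivalently, the underlying graph is a tree (on the support together
with the root) and every edge is directed away from the root `z` along the unique
path from `z`. -/
def IsOrientedRootedTree (D : WOGraph V) (z : V) : Prop :=
  (∀ u : V, (u, z) ∉ D.E) ∧
    ∀ v : V, ¬ D.IsIsolated v → v ≠ z →
      Relation.ReflTransGen (fun a b : V => (a, b) ∈ D.E) z v ∧ (∃! u : V, (u, v) ∈ D.E)

end WOGraph

/-- The `s`-th symbolic power `I^{(s)} = ⋂_{p ∈ Ass(R/I)} (I^s R_p ∩ R)` of an ideal `I`,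
where the contraction `I^s R_p ∩ R` is the preimage of `I^s R_p` under `R → R_p`. -/
noncomputable def symbolicPower {R : Type*} [CommRing R] (I : Ideal R) (s : ℕ) : Ideal R :=
  ⨅ p : associatedPrimes R (R ⧸ I),
    haveI : p.1.IsPrime := p.2.1
    (Ideal.map (algebraMap R (Localization p.1.primeCompl)) (I ^ s)).comap
      (algebraMap R (Localization p.1.primeCompl))

section Statement8Aux

open Finsupp

variable {σ : Type*} {k : Type*} [Field k]

private lemma stmt8_X_mul_X_pow (a b : σ) (m : ℕ) :
    (X a * X b ^ m : MvPolynomial σ k) = monomial (single a 1 + single b m) 1 := by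
  rw [← pow_one (X a), X_pow_eq_monomial, X_pow_eq_monomial, monomial_mul, one_mul]

private lemma stmt8_mem_span_monomials_iff (Dset : Set (σ →₀ ℕ)) (h : MvPolynomial σ k) :
    h ∈ Ideal.span ((fun d => (monomial d (1 : k) : MvPolynomial σ k)) '' Dset) ↔
      ∀ μ ∈ h.support, ∃ d ∈ Dset, d ≤ μ := by
  classical
  constructor
  · intro hmem
    induction hmem using Submodule.span_induction with
    | mem x hx =>
      obtain ⟨d, hd, rfl⟩ := hx
      intro μ hμ
      rw [MvPolynomial.support_monomial] at hμ
      simp only [one_ne_zero, if_false, Finset.mem_singleton] at hμ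
      exact ⟨d, hd, hμ ▸ le_rfl⟩
    | zero => simp
    | add x y hx hy ihx ihy =>
      intro μ hμ
      rcases Finset.mem_union.mp (MvPolynomial.support_add hμ) with h' | h'
      · exact ihx μ h'
      · exact ihy μ h'
    | smul a x hx ih =>
      intro μ hμ
      rw [smul_eq_mul] at hμ
      obtain ⟨ν₁, hν₁, ν₂, hν₂, rfl⟩ := Finset.mem_add.mp (MvPolynomial.support_mul a x hμ)
      obtain ⟨d, hd, hle⟩ := ih ν₂ hν₂
      exact ⟨d, hd, hle.trans le_add_self⟩
  · intro hall
    rw [h.as_sum]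
    refine Ideal.sum_mem _ fun μ hμ => ?_
    obtain ⟨d, hd, hle⟩ := hall μ hμ
    have : (monomial μ) (MvPolynomial.coeff μ h) =
        monomial (μ - d) (MvPolynomial.coeff μ h) * monomial d 1 := by
      rw [monomial_mul, mul_one, tsub_add_cancel_of_le hle]
    rw [this]
    exact Ideal.mul_mem_left _ _ (Ideal.subset_span ⟨d, hd, rfl⟩)

private lemma stmt8_mem_edgeIdeal_iff {n : ℕ} (D : WOGraph (Fin n))
    (h : MvPolynomial (Fin n) k) :
    h ∈ D.edgeIdeal k ↔ ∀ μ ∈ h.support, ∃ e ∈ D.E,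
      single e.1 1 + single e.2 (D.w e.2) ≤ μ := by
  have hspan : D.edgeIdeal k = Ideal.span ((fun d => (monomial d (1 : k) : MvPolynomial (Fin n) k)) ''
      {d | ∃ e ∈ D.E, d = single e.1 1 + single e.2 (D.w e.2)}) := by
    unfold WOGraph.edgeIdeal
    congr 1
    ext f
    constructor
    · rintro ⟨e, he, rfl⟩
      exact ⟨_, ⟨e, he, rfl⟩, (stmt8_X_mul_X_pow e.1 e.2 (D.w e.2)).symm⟩
    · rintro ⟨d, ⟨e, he, rfl⟩, rfl⟩
      exact ⟨e, he, (stmt8_X_mul_X_pow e.1 e.2 (D.w e.2)).symm⟩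
  rw [hspan, stmt8_mem_span_monomials_iff]
  constructor
  · intro H μ hμ
    obtain ⟨d, ⟨e, he, rfl⟩, hle⟩ := H μ hμ
    exact ⟨e, he, hle⟩
  · intro H μ hμ
    obtain ⟨e, he, hle⟩ := H μ hμ
    exact ⟨_, ⟨e, he, rfl⟩, hle⟩

private lemma stmt8_deg_le_iff {n : ℕ} {a b : Fin n} (hab : a ≠ b) (m : ℕ) (μ : Fin n →₀ ℕ) :
    single a 1 + single b m ≤ μ ↔ 1 ≤ μ a ∧ m ≤ μ b := by
  classical
  simp only [Finsupp.le_def, Finsupp.add_apply, Finsupp.single_apply]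
  constructor
  · intro h
    refine ⟨?_, ?_⟩
    · have := h a
      rw [if_pos rfl, if_neg (Ne.symm hab)] at this
      omega
    · have := h b
      rw [if_neg hab, if_pos rfl] at this
      omega
  · rintro ⟨h1, h2⟩ x
    by_cases hax : a = x
    · subst hax
      rw [if_pos rfl, if_neg (Ne.symm hab)]
      omega
    · by_cases hbx : b = x
      · subst hbx
        rw [if_neg hax, if_pos rfl]
        omega
      · rw [if_neg hax, if_neg hbx]
        omega

end Statement8Aux

section Statement8Key

open Finsupp

variable {n : ℕ} {k : Type*} [Field k]

set_option maxHeartbeats 1600000 in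
private lemma stmt8_key (D : WOGraph (Fin n))
    (hE : D.E = {e : Fin n × Fin n | (e.2 : ℕ) = (e.1 : ℕ) + 1})
    {i : ℕ} (hi1 : 1 ≤ i) (hin : i + 1 < n)
    (hwi1 : D.w ⟨i, by omega⟩ = 1)
    {p : Ideal (MvPolynomial (Fin n) k)}
    (hp : p ∈ associatedPrimes (MvPolynomial (Fin n) k)
      (MvPolynomial (Fin n) k ⧸ D.edgeIdeal k))
    (h2 : X (⟨i, by omega⟩ : Fin n) ∈ p) (h3 : X (⟨i + 1, hin⟩ : Fin n) ∈ p) :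
    ∃ h4 : i + 2 < n, X (⟨i + 2, h4⟩ : Fin n) ∉ p := by
  classical
  obtain ⟨hpr, x, hx⟩ := isAssociatedPrime_iff.mp (AssociatedPrimes.mem_iff.mp hp)
  obtain ⟨g, rfl⟩ := Ideal.Quotient.mk_surjective x
  -- membership in p is a colon condition
  have hmem : ∀ r : MvPolynomial (Fin n) k, r ∈ p ↔ r * g ∈ D.edgeIdeal k := by
    intro r
    have hsm : r • (Ideal.Quotient.mk (D.edgeIdeal k) g) =
        Ideal.Quotient.mk (D.edgeIdeal k) (r * g) :=
      (Submodule.Quotient.mk_smul (D.edgeIdeal k) r g).symm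
    rw [hx, Submodule.mem_colon_singleton, hsm, Submodule.mem_bot,
      Ideal.Quotient.eq_zero_iff_mem]
  have hg : g ∉ D.edgeIdeal k := by
    intro h
    exact hpr.ne_top ((Ideal.eq_top_iff_one p).mpr ((hmem 1).mpr (by simpa using h)))
  -- a monomial of `g` not divisible by any generator
  obtain ⟨μ, hμ, hbad⟩ : ∃ μ ∈ g.support, ∀ e ∈ D.E,
      ¬ (single e.1 1 + single e.2 (D.w e.2) ≤ μ) := by
    by_contra hc
    push_neg at hc
    exact hg ((stmt8_mem_edgeIdeal_iff D g).mpr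
      (fun μ hμ => by
        obtain ⟨e, he, hle⟩ := hc μ hμ; exact ⟨e, he, hle⟩))
  have step : ∀ v : Fin n, X v * g ∈ D.edgeIdeal k →
      ∃ e ∈ D.E, single e.1 1 + single e.2 (D.w e.2) ≤ μ + single v 1 := by
    intro v hvg
    have hco : MvPolynomial.coeff (μ + single v 1) (X v * g) = MvPolynomial.coeff μ g := by
      rw [add_comm]; exact MvPolynomial.coeff_X_mul μ v g
    have hsup : μ + single v 1 ∈ (X v * g).support := by
      rw [MvPolynomial.mem_support_iff, hco]
      exact MvPolynomial.mem_support_iff.mp hμ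
    exact (stmt8_mem_edgeIdeal_iff D (X v * g)).mp hvg _ hsup
  -- generic analysis of a divisibility `d_e ≤ μ + x_j`
  have analyze : ∀ (j : ℕ) (hj : j < n),
      (∃ e ∈ D.E, single e.1 1 + single e.2 (D.w e.2) ≤ μ + single ⟨j, hj⟩ 1) →
      (∃ hj1 : j + 1 < n, μ ⟨j, hj⟩ = 0 ∧ D.w ⟨j + 1, hj1⟩ ≤ μ ⟨j + 1, hj1⟩) ∨
      (∃ hj0 : 1 ≤ j, 1 ≤ μ ⟨j - 1, (Nat.sub_le j 1).trans_lt hj⟩ ∧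
        D.w ⟨j, hj⟩ = μ ⟨j, hj⟩ + 1) := by
    rintro j hj ⟨⟨a, b⟩, he, hle⟩
    have he' : (b : ℕ) = (a : ℕ) + 1 := by rw [hE] at he; exact he
    have hab : a ≠ b := fun h => by rw [h] at he'; omega
    have han : (a : ℕ) < n := a.isLt
    have hbn : (b : ℕ) < n := b.isLt
    have hle' : single a 1 + single b (D.w b) ≤ μ + single (⟨j, hj⟩ : Fin n) 1 := hle
    obtain ⟨H1, H2⟩ := (stmt8_deg_le_iff hab (D.w b) _).mp hle'
    rw [Finsupp.add_apply] at H1 H2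
    rcases eq_or_ne (a : ℕ) j with haj | haj
    · -- e = (x_j, x_{j+1})
      left
      have hj1 : j + 1 < n := by omega
      have ha : a = ⟨j, hj⟩ := Fin.ext haj
      have hb : b = ⟨j + 1, hj1⟩ := Fin.ext (show (b : ℕ) = j + 1 by omega)
      subst ha; subst hb
      rw [Finsupp.single_eq_of_ne (fun h => by rw [Fin.mk.injEq] at h; omega),
        add_zero] at H2
      have hbadn : ¬ (single (⟨j, hj⟩ : Fin n) 1 +
          single (⟨j + 1, hj1⟩ : Fin n) (D.w ⟨j + 1, hj1⟩) ≤ μ) := hbad _ he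
      rw [stmt8_deg_le_iff hab] at hbadn
      have hii : μ ⟨j, hj⟩ = 0 := by
        by_contra hcon
        exact hbadn ⟨by omega, by omega⟩
      exact ⟨hj1, hii, by omega⟩
    · rcases eq_or_ne (b : ℕ) j with hbj | hbj
      · -- e = (x_{j-1}, x_j)
        right
        have hj0 : 1 ≤ j := by omega
        have ha : a = ⟨j - 1, (Nat.sub_le j 1).trans_lt hj⟩ :=
          Fin.ext (show (a : ℕ) = j - 1 by omega)
        have hb : b = ⟨j, hj⟩ := Fin.ext hbj
        subst ha; subst hb
        rw [Finsupp.single_eq_of_ne (fun h => by rw [Fin.mk.injEq] at h; omega),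
          add_zero] at H1
        rw [Finsupp.single_eq_same] at H2
        have hbadn : ¬ (single (⟨j - 1, (Nat.sub_le j 1).trans_lt hj⟩ : Fin n) 1 +
            single (⟨j, hj⟩ : Fin n) (D.w ⟨j, hj⟩) ≤ μ) := hbad _ he
        rw [stmt8_deg_le_iff hab] at hbadn
        have hw : D.w ⟨j, hj⟩ = μ ⟨j, hj⟩ + 1 := by
          by_contra hcon
          exact hbadn ⟨by omega, by omega⟩
        exact ⟨hj0, by omega, hw⟩
      · -- the generator already divides μ: contradiction
        exfalso
        rw [Finsupp.single_eq_of_ne' (fun h => haj (by rw [← h])), add_zero] at H1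
        rw [Finsupp.single_eq_of_ne' (fun h => hbj (by rw [← h])), add_zero] at H2
        have hbadn : ¬ (single a 1 + single b (D.w b) ≤ μ) := hbad _ he
        exact hbadn ((stmt8_deg_le_iff hab _ _).mpr ⟨by omega, by omega⟩)
  -- Step 1 : μ_i = 0
  have hiin : i < n := by omega
  have r1 : μ ⟨i, hiin⟩ = 0 := by
    rcases analyze i hiin (step _ ((hmem _).mp h2)) with ⟨hj1, h0, _⟩ | ⟨hj0, _, hw⟩
    · exact h0
    · rw [hwi1] at hw; omega
  -- Step 2 : i+2 < n, μ_{i+1} = 0, μ_{i+2} ≥ w_{i+2}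
  obtain ⟨h4, r2, r3⟩ : ∃ h4 : i + 2 < n, μ ⟨i + 1, hin⟩ = 0 ∧
      D.w ⟨i + 2, h4⟩ ≤ μ ⟨i + 2, h4⟩ := by
    rcases analyze (i + 1) hin (step _ ((hmem _).mp h3)) with ⟨hj1, h0, hw⟩ | ⟨hj0, h1', _⟩
    · exact ⟨by omega, h0, hw⟩
    · exfalso
      have heq : (⟨i + 1 - 1, (Nat.sub_le (i + 1) 1).trans_lt hin⟩ : Fin n) = ⟨i, hiin⟩ :=
        Fin.ext (show i + 1 - 1 = i by omega)
      rw [heq] at h1'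
      omega
  refine ⟨h4, fun hc => ?_⟩
  rcases analyze (i + 2) h4 (step _ ((hmem _).mp hc)) with ⟨hj1, h0, _⟩ | ⟨hj0, h1', _⟩
  · have := D.w_pos ⟨i + 2, h4⟩
    omega
  · have heq : (⟨i + 2 - 1, (Nat.sub_le (i + 2) 1).trans_lt h4⟩ : Fin n) = ⟨i + 1, hin⟩ :=
      Fin.ext (by omega)
    rw [heq] at h1'
    omega

end Statement8Key

private lemma stmt8_loc_mem {R : Type*} [CommRing R] {J p : Ideal R} [p.IsPrime]
    {u f : R} (hu : u ∉ p) (huf : u * f ∈ J) :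
    f ∈ (Ideal.map (algebraMap R (Localization p.primeCompl)) J).comap
      (algebraMap R (Localization p.primeCompl)) := by
  rw [Ideal.mem_comap]
  have h1 : algebraMap R (Localization p.primeCompl) (u * f) ∈
      Ideal.map (algebraMap R (Localization p.primeCompl)) J :=
    Ideal.mem_map_of_mem _ huf
  rw [map_mul] at h1
  obtain ⟨v, hv⟩ := IsLocalization.map_units (Localization p.primeCompl)
    (⟨u, hu⟩ : p.primeCompl)
  have h2 := Ideal.mul_mem_left _ (↑v⁻¹) h1
  rwa [← hv, ← mul_assoc, Units.inv_mul, one_mul] at h2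


set_option maxHeartbeats 1600000 in
/-- Let `D` be a weighted oriented uni-directed line on vertices
`x₁, …, xₙ` (vertex `xₜ` is the index `t - 1 : Fin n`) with edges `(xᵢ, xᵢ₊₁)` for
`1 ≤ i ≤ n-1`, and suppose for some `1 < i < n-1` one has `wᵢ ≥ 2` and `wᵢ₊₁ = 1`.
Then the monomial `f = xᵢ₋₁ · xᵢ^{wᵢ} · xᵢ₊₁² · xᵢ₊₂^{wᵢ₊₂}` belongs to `I(D)^{(3)}`. -/
theorem statement_8 {n : ℕ} (k : Type*) [Field k] (D : WOGraph (Fin n))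
    (hE : D.E = {e : Fin n × Fin n | (e.2 : ℕ) = (e.1 : ℕ) + 1})
    (i : ℕ) (hi1 : 1 < i) (hi2 : i < n - 1)
    (hwi : 2 ≤ D.w ⟨i - 1, by omega⟩)
    (hwi1 : D.w ⟨i, by omega⟩ = 1) :
    (X ⟨i - 2, by omega⟩ * X ⟨i - 1, by omega⟩ ^ D.w ⟨i - 1, by omega⟩ *
        X ⟨i, by omega⟩ ^ 2 *
        X ⟨i + 1, by omega⟩ ^ D.w ⟨i + 1, by omega⟩ : MvPolynomial (Fin n) k) ∈
      symbolicPower (D.edgeIdeal k) 3 := by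
  classical
  have h0 : i - 2 < n := by omega
  have h1 : i - 1 < n := by omega
  have h2 : i < n := by omega
  have h3 : i + 1 < n := by omega
  have hwi' : 2 ≤ D.w (⟨i - 1, h1⟩ : Fin n) := hwi
  have hwi1' : D.w (⟨i, h2⟩ : Fin n) = 1 := hwi1
  show (X (⟨i - 2, h0⟩ : Fin n) * X (⟨i - 1, h1⟩ : Fin n) ^ D.w (⟨i - 1, h1⟩ : Fin n) * X (⟨i, h2⟩ : Fin n) ^ 2 * X (⟨i + 1, h3⟩ : Fin n) ^ D.w (⟨i + 1, h3⟩ : Fin n) : MvPolynomial (Fin n) k) ∈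
      symbolicPower (D.edgeIdeal k) 3
  -- generators
  have gen_mem : ∀ (s t : ℕ) (hs : s < n) (ht : t < n), t = s + 1 →
      (X (⟨s, hs⟩ : Fin n) * X (⟨t, ht⟩ : Fin n) ^ D.w ⟨t, ht⟩ : MvPolynomial (Fin n) k) ∈
        D.edgeIdeal k := by
    intro s t hs ht hst
    exact Ideal.subset_span ⟨((⟨s, hs⟩ : Fin n), (⟨t, ht⟩ : Fin n)), by rw [hE]; exact hst, rfl⟩
  have e01 : (X (⟨i - 2, h0⟩ : Fin n) * X (⟨i - 1, h1⟩ : Fin n) ^ D.w (⟨i - 1, h1⟩ : Fin n) : MvPolynomial (Fin n) k) ∈ D.edgeIdeal k :=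
    gen_mem (i - 2) (i - 1) h0 h1 (by omega)
  have e12 : (X (⟨i - 1, h1⟩ : Fin n) * X (⟨i, h2⟩ : Fin n) ^ D.w (⟨i, h2⟩ : Fin n) : MvPolynomial (Fin n) k) ∈ D.edgeIdeal k :=
    gen_mem (i - 1) i h1 h2 (by omega)
  have e23 : (X (⟨i, h2⟩ : Fin n) * X (⟨i + 1, h3⟩ : Fin n) ^ D.w (⟨i + 1, h3⟩ : Fin n) : MvPolynomial (Fin n) k) ∈ D.edgeIdeal k :=
    gen_mem i (i + 1) h2 h3 (by omega)
  have hpow : ∀ {a b c : MvPolynomial (Fin n) k}, a ∈ D.edgeIdeal k → b ∈ D.edgeIdeal k →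
      c ∈ D.edgeIdeal k → a * b * c ∈ D.edgeIdeal k ^ 3 := by
    intro a b c ha hb hc
    rw [pow_succ, pow_two]
    exact Ideal.mul_mem_mul (Ideal.mul_mem_mul ha hb) hc
  obtain ⟨a, ha⟩ : ∃ a, D.w (⟨i - 1, h1⟩ : Fin n) = 2 + a := Nat.exists_eq_add_of_le hwi'
  obtain ⟨b, hb⟩ : ∃ b, D.w (⟨i + 1, h3⟩ : Fin n) = 1 + b := Nat.exists_eq_add_of_le (D.w_pos (⟨i + 1, h3⟩ : Fin n))
  unfold symbolicPower
  rw [Submodule.mem_iInf]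
  rintro ⟨p, hp⟩
  haveI hprime : p.IsPrime := hp.1
  by_cases hm2 : X (⟨i, h2⟩ : Fin n) ∈ p
  · by_cases hm3 : X (⟨i + 1, h3⟩ : Fin n) ∈ p
    · -- both in p : use the key lemma
      obtain ⟨h4, hm4⟩ := stmt8_key D hE (by omega : 1 ≤ i) h3 hwi1' hp hm2 hm3
      have e34 : (X (⟨i + 1, h3⟩ : Fin n) * X (⟨i + 2, h4⟩ : Fin n) ^ D.w (⟨i + 2, h4⟩ : Fin n) : MvPolynomial (Fin n) k) ∈ D.edgeIdeal k :=
        gen_mem (i + 1) (i + 2) h3 h4 (by omega)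
      have hu : (X (⟨i + 2, h4⟩ : Fin n) : MvPolynomial (Fin n) k) ^ D.w (⟨i + 2, h4⟩ : Fin n) ∉ p :=
        fun hc => hm4 (hprime.mem_of_pow_mem _ hc)
      refine stmt8_loc_mem hu ?_
      have heq : (X (⟨i + 2, h4⟩ : Fin n) : MvPolynomial (Fin n) k) ^ D.w (⟨i + 2, h4⟩ : Fin n) * (X (⟨i - 2, h0⟩ : Fin n) * X (⟨i - 1, h1⟩ : Fin n) ^ D.w (⟨i - 1, h1⟩ : Fin n) * X (⟨i, h2⟩ : Fin n) ^ 2 * X (⟨i + 1, h3⟩ : Fin n) ^ D.w (⟨i + 1, h3⟩ : Fin n)) =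
          ((X (⟨i - 1, h1⟩ : Fin n) * X (⟨i, h2⟩ : Fin n) ^ D.w (⟨i, h2⟩ : Fin n)) * (X (⟨i - 1, h1⟩ : Fin n) * X (⟨i, h2⟩ : Fin n) ^ D.w (⟨i, h2⟩ : Fin n)) * (X (⟨i + 1, h3⟩ : Fin n) * X (⟨i + 2, h4⟩ : Fin n) ^ D.w (⟨i + 2, h4⟩ : Fin n))) *
            (X (⟨i - 2, h0⟩ : Fin n) * X (⟨i - 1, h1⟩ : Fin n) ^ a * X (⟨i + 1, h3⟩ : Fin n) ^ b) := by
        rw [hwi1', ha, hb]; ring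
      rw [heq]
      exact Ideal.mul_mem_right _ _ (hpow e12 e12 e34)
    · -- X (⟨i + 1, h3⟩ : Fin n) ∉ p
      have hu : (X (⟨i + 1, h3⟩ : Fin n) : MvPolynomial (Fin n) k) ^ D.w (⟨i + 1, h3⟩ : Fin n) ∉ p :=
        fun hc => hm3 (hprime.mem_of_pow_mem _ hc)
      refine stmt8_loc_mem hu ?_
      have heq : (X (⟨i + 1, h3⟩ : Fin n) : MvPolynomial (Fin n) k) ^ D.w (⟨i + 1, h3⟩ : Fin n) * (X (⟨i - 2, h0⟩ : Fin n) * X (⟨i - 1, h1⟩ : Fin n) ^ D.w (⟨i - 1, h1⟩ : Fin n) * X (⟨i, h2⟩ : Fin n) ^ 2 * X (⟨i + 1, h3⟩ : Fin n) ^ D.w (⟨i + 1, h3⟩ : Fin n)) =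
          (X (⟨i - 2, h0⟩ : Fin n) * X (⟨i - 1, h1⟩ : Fin n) ^ D.w (⟨i - 1, h1⟩ : Fin n)) * (X (⟨i, h2⟩ : Fin n) * X (⟨i + 1, h3⟩ : Fin n) ^ D.w (⟨i + 1, h3⟩ : Fin n)) * (X (⟨i, h2⟩ : Fin n) * X (⟨i + 1, h3⟩ : Fin n) ^ D.w (⟨i + 1, h3⟩ : Fin n)) := by
        ring
      rw [heq]
      exact hpow e01 e23 e23
  · -- X (⟨i, h2⟩ : Fin n) ∉ p
    refine stmt8_loc_mem hm2 ?_
    have heq : (X (⟨i, h2⟩ : Fin n) : MvPolynomial (Fin n) k) * (X (⟨i - 2, h0⟩ : Fin n) * X (⟨i - 1, h1⟩ : Fin n) ^ D.w (⟨i - 1, h1⟩ : Fin n) * X (⟨i, h2⟩ : Fin n) ^ 2 * X (⟨i + 1, h3⟩ : Fin n) ^ D.w (⟨i + 1, h3⟩ : Fin n)) =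
        ((X (⟨i - 1, h1⟩ : Fin n) * X (⟨i, h2⟩ : Fin n) ^ D.w (⟨i, h2⟩ : Fin n)) * (X (⟨i - 1, h1⟩ : Fin n) * X (⟨i, h2⟩ : Fin n) ^ D.w (⟨i, h2⟩ : Fin n)) * (X (⟨i, h2⟩ : Fin n) * X (⟨i + 1, h3⟩ : Fin n) ^ D.w (⟨i + 1, h3⟩ : Fin n))) *
          (X (⟨i - 2, h0⟩ : Fin n) * X (⟨i - 1, h1⟩ : Fin n) ^ a) := by
      rw [hwi1', ha]; ring
    rw [heq]
    exact Ideal.mul_mem_right _ _ (hpow e12 e12 e23)
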